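/- For every positive integer a, o(2a) = o(a) + a, where o(g) = g − l(g). -/

import Mathlib

noncomputable def ell (g : ℕ) : ℕ :=
  sInf {k | ∃ a n : Fin k → ℕ, (∀ i, a i = 1 ∨ a i = 3) ∧ g = ∑ i, a i * 2 ^ n i}

noncomputable def obj (g : ℕ) : ℕ := g - ell g

def valP (p : ℕ × ℕ) : ℕ := p.1 * 2 ^ p.2
def sumL (l : List (ℕ × ℕ)) : ℕ := (l.map valP).sum
def OKl (l : List (ℕ × ℕ)) : Prop := ∀ p ∈ l, p.1 = 1 ∨ p.1 = 3

lemma sumL_cons (p : ℕ × ℕ) (t : List (ℕ × ℕ)) : sumL (p :: t) = valP p + sumL t := by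
  simp [sumL]

lemma mem_S_iff (g k : ℕ) :
    (∃ a n : Fin k → ℕ, (∀ i, a i = 1 ∨ a i = 3) ∧ g = ∑ i, a i * 2 ^ n i) ↔
    ∃ l : List (ℕ × ℕ), l.length = k ∧ OKl l ∧ sumL l = g := by
  constructor
  · rintro ⟨a, n, hok, hsum⟩
    refine ⟨List.ofFn (fun i => (a i, n i)), by simp, ?_, ?_⟩
    · intro p hp
      rw [List.mem_ofFn] at hp
      obtain ⟨i, hi⟩ := hp
      subst hi; exact hok i
    · simp only [sumL, List.map_ofFn, List.sum_ofFn]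
      exact hsum.symm
  · rintro ⟨l, hl, hok, hsum⟩
    subst hl
    refine ⟨fun i => (l.get i).1, fun i => (l.get i).2, fun i => hok _ (List.get_mem l i), ?_⟩
    rw [← hsum]
    simp only [sumL]
    conv_lhs => rw [← List.ofFn_get l]
    rw [List.map_ofFn, List.sum_ofFn]
    rfl

lemma parityL (l : List (ℕ × ℕ)) (hok : OKl l) :
    sumL l % 2 = (l.countP (fun p => p.2 == 0)) % 2 := by
  induction l with
  | nil => simp [sumL]
  | cons p t ih =>
    have hok' : OKl t := fun q hq => hok q (List.mem_cons_of_mem _ hq)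
    have hih := ih hok'
    rw [sumL_cons, List.countP_cons]
    rcases Nat.eq_zero_or_pos p.2 with h0 | h1
    · have hv : valP p % 2 = 1 := by
        rcases hok p List.mem_cons_self with h | h <;> simp [valP, h0, h]
      simp only [h0]
      simp only [beq_self_eq_true, if_pos]
      omega
    · have hv : valP p % 2 = 0 := by
        obtain ⟨m, hm⟩ := Nat.exists_eq_add_of_le h1
        simp [valP, hm, pow_succ, pow_add]
        ring_nf
        omega
      have : (p.2 == 0) = false := by simp; omega
      rw [this]
      simp
      omega

lemma halveL : ∀ k : ℕ, ∀ l : List (ℕ × ℕ), ∀ g : ℕ, l.length = k → OKl l →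
    sumL l = 2 * g → ∃ l' : List (ℕ × ℕ), l'.length ≤ k ∧ OKl l' ∧ sumL l' = g := by
  intro k
  induction k using Nat.strong_induction_on with
  | _ k ih =>
    intro l g hlen hok hsum
    by_cases hall : ∀ p ∈ l, 1 ≤ p.2
    · refine ⟨l.map (fun p => (p.1, p.2 - 1)), by simp [hlen], ?_, ?_⟩
      · intro p hp
        rw [List.mem_map] at hp
        obtain ⟨q, hq, hq2⟩ := hp
        rcases hok q hq with h | h <;> simp [← hq2, h]
      · have key : ∀ l : List (ℕ × ℕ), (∀ p ∈ l, 1 ≤ p.2) →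
            sumL l = 2 * sumL (l.map (fun p => (p.1, p.2 - 1))) := by
          intro l
          induction l with
          | nil => simp [sumL]
          | cons p t iht =>
            intro h
            have h1 : 1 ≤ p.2 := h p List.mem_cons_self
            have ht := iht (fun q hq => h q (List.mem_cons_of_mem _ hq))
            rw [sumL_cons, List.map_cons, sumL_cons, ht]
            have : valP p = 2 * valP (p.1, p.2 - 1) := by
              simp only [valP]
              obtain ⟨m, hm⟩ := Nat.exists_eq_add_of_le h1
              simp [hm, pow_succ, pow_add]
              ring
            omega
        have := key l hall
        omega
    · push_neg at hall
      obtain ⟨p, hp, hp2⟩ := hall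
      have hp0 : p.2 = 0 := by omega
      set pred := (fun q : ℕ × ℕ => q.2 == 0) with hpred
      obtain ⟨s, t, hst⟩ := List.append_of_mem hp
      have hperm1 : List.Perm l (p :: (s ++ t)) := by rw [hst]; exact List.perm_middle
      have hcnt1 : l.countP pred = (s ++ t).countP pred + 1 := by
        rw [hperm1.countP_eq, List.countP_cons]
        simp [hpred, hp0]
      have hparity := parityL l hok
      rw [hsum, ← hpred] at hparity
      have hcpos : 0 < (s ++ t).countP pred := by omega
      rw [List.countP_pos_iff] at hcpos
      obtain ⟨q, hq, hq2⟩ := hcpos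
      have hq0 : q.2 = 0 := by simpa [hpred] using hq2
      obtain ⟨s2, t2, hst2⟩ := List.append_of_mem hq
      set l3 := s2 ++ t2 with hl3
      have hperm2 : List.Perm (s ++ t) (q :: l3) := by rw [hst2]; exact List.perm_middle
      have hperm : List.Perm l (p :: q :: l3) := hperm1.trans (List.Perm.cons _ hperm2)
      have hsum3 : sumL l = p.1 + q.1 + sumL l3 := by
        have := (hperm.map valP).sum_eq
        simp only [sumL] at *
        rw [this]
        simp [valP, hp0, hq0]
        ring
      have hokl3 : OKl l3 := by
        intro r hr
        apply hok r
        exact (hperm.mem_iff).mpr (List.mem_cons_of_mem _ (List.mem_cons_of_mem _ hr))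
      have hlen3 : l3.length + 2 = k := by
        have h1 : l.length = s.length + t.length + 1 := by rw [hst]; simp; omega
        have h2 : s.length + t.length = s2.length + t2.length + 1 := by
          have := congrArg List.length hst2
          simp at this
          omega
        have h3 : l3.length = s2.length + t2.length := by simp [hl3]
        omega
      -- p.1 + q.1 ∈ {2,4,6}
      have hpq : ∃ c m : ℕ, (c = 1 ∨ c = 3) ∧ p.1 + q.1 = c * 2 ^ m := by
        rcases hok p hp with h | h <;>
          rcases hok q ((hperm1.mem_iff).mpr (List.mem_cons_of_mem _ hq)) with h' | h'
        · exact ⟨1, 1, Or.inl rfl, by rw [h, h']; norm_num⟩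
        · exact ⟨1, 2, Or.inl rfl, by rw [h, h']; norm_num⟩
        · exact ⟨1, 2, Or.inl rfl, by rw [h, h']; norm_num⟩
        · exact ⟨3, 1, Or.inr rfl, by rw [h, h']; norm_num⟩
      obtain ⟨c, m, hc, hcm⟩ := hpq
      have hnewsum : sumL ((c, m) :: l3) = 2 * g := by
        rw [sumL_cons]
        simp only [valP]
        omega
      have hnewok : OKl ((c, m) :: l3) := by
        intro r hr
        rcases List.mem_cons.mp hr with h | h
        · subst h; exact hc
        · exact hokl3 r h
      obtain ⟨l', hl'len, hl'ok, hl'sum⟩ :=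
        ih (l3.length + 1) (by omega) ((c, m) :: l3) g (by simp) hnewok hnewsum
      exact ⟨l', by omega, hl'ok, hl'sum⟩

lemma mem_self (g : ℕ) :
    g ∈ {k | ∃ a n : Fin k → ℕ, (∀ i, a i = 1 ∨ a i = 3) ∧ g = ∑ i, a i * 2 ^ n i} := by
  exact ⟨fun _ => 1, fun _ => 0, fun i => Or.inl rfl, by simp⟩

lemma ell_le_self (g : ℕ) : ell g ≤ g := Nat.sInf_le (mem_self g)

lemma ell_mem (g : ℕ) :
    ell g ∈ {k | ∃ a n : Fin k → ℕ, (∀ i, a i = 1 ∨ a i = 3) ∧ g = ∑ i, a i * 2 ^ n i} :=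
  Nat.sInf_mem ⟨g, mem_self g⟩

lemma ell_two_mul (g : ℕ) : ell (2 * g) = ell g := by
  apply le_antisymm
  · -- shift exponents up
    obtain ⟨l, hlen, hok, hsum⟩ := (mem_S_iff g (ell g)).mp (ell_mem g)
    apply Nat.sInf_le
    rw [Set.mem_setOf_eq, mem_S_iff]
    refine ⟨l.map (fun p => (p.1, p.2 + 1)), by simp [hlen], ?_, ?_⟩
    · intro p hp
      rw [List.mem_map] at hp
      obtain ⟨q, hq, hq2⟩ := hp
      rcases hok q hq with h | h <;> simp [← hq2, h]
    · rw [← hsum]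
      clear hsum hlen
      induction l with
      | nil => simp [sumL]
      | cons p t iht =>
        have := iht (fun q hq => hok q (List.mem_cons_of_mem _ hq))
        rw [List.map_cons, sumL_cons, sumL_cons, this]
        simp [valP, pow_succ]
        ring
  · obtain ⟨l, hlen, hok, hsum⟩ := (mem_S_iff (2 * g) (ell (2 * g))).mp (ell_mem (2 * g))
    obtain ⟨l', hl'len, hl'ok, hl'sum⟩ := halveL (ell (2 * g)) l g hlen hok hsum
    calc ell g ≤ l'.length := Nat.sInf_le ((mem_S_iff g l'.length).mpr ⟨l', rfl, hl'ok, hl'sum⟩)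
      _ ≤ ell (2 * g) := hl'len

theorem stmt4 (a : ℕ) (ha : 0 < a) : obj (2 * a) = obj a + a := by
  have h1 := ell_two_mul a
  have h2 := ell_le_self a
  simp only [obj, h1]
  omega
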